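/- Let Â : Matrix (Fin N) (Fin N) ℝ. Then Â is Schur stable (every complex eigenvalue of Â has modulus < 1) if and only if there exists a positive-definite matrix Q : Matrix (Fin N) (Fin N) ℝ such that the 2N×2N block matrix fromBlocks Q Âᵀ Â Q⁻¹ is positive definite. (This is the LMI characterization, Eq. (13) with the coupling constraint Q = R⁻¹, used in the paper to compute the block-diagonal estimator gain.) -/

import Mathlib

open Matrix Filter
open scoped ENNReal NNReal

namespace SchurLMI

attribute [local instance] Matrix.linftyOpNormedAddCommGroup Matrix.linftyOpNormedRing
  Matrix.linftyOpNormedSpace Matrix.linftyOpNormedAlgebra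

variable {N : ℕ}

lemma entry_nnnorm_le {𝕜 : Type*} [NormedField 𝕜] (M : Matrix (Fin N) (Fin N) 𝕜) (i j : Fin N) :
    ‖M i j‖₊ ≤ ‖M‖₊ := by
  rw [Matrix.linfty_opNNNorm_def]
  refine le_trans ?_ (Finset.le_sup (Finset.mem_univ i))
  exact Finset.single_le_sum (f := fun j => ‖M i j‖₊) (fun _ _ => zero_le) (Finset.mem_univ j)

lemma entry_norm_le {𝕜 : Type*} [NormedField 𝕜] (M : Matrix (Fin N) (Fin N) 𝕜) (i j : Fin N) :
    ‖M i j‖ ≤ ‖M‖ := entry_nnnorm_le M i j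

lemma nnnorm_map_ofReal (M : Matrix (Fin N) (Fin N) ℝ) :
    ‖M.map Complex.ofReal‖₊ = ‖M‖₊ := by
  simp [Matrix.linfty_opNNNorm_def, Matrix.map_apply]

lemma mem_spectrum_transpose {M : Matrix (Fin N) (Fin N) ℂ} {μ : ℂ} :
    μ ∈ spectrum ℂ Mᵀ ↔ μ ∈ spectrum ℂ M := by
  have hdet : (algebraMap ℂ (Matrix (Fin N) (Fin N) ℂ) μ - Mᵀ).det
      = (algebraMap ℂ (Matrix (Fin N) (Fin N) ℂ) μ - M).det := by
    rw [← Matrix.det_transpose (algebraMap ℂ (Matrix (Fin N) (Fin N) ℂ) μ - M),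
      Matrix.transpose_sub, Algebra.algebraMap_eq_smul_one, Matrix.transpose_smul,
      Matrix.transpose_one, ← Algebra.algebraMap_eq_smul_one]
  simp only [spectrum.mem_iff, Matrix.isUnit_iff_isUnit_det, hdet]

lemma exists_left_eigenvector {M : Matrix (Fin N) (Fin N) ℂ} {μ : ℂ} (h : μ ∈ spectrum ℂ M) :
    ∃ v : Fin N → ℂ, v ≠ 0 ∧ Mᵀ *ᵥ v = μ • v := by
  rw [← mem_spectrum_transpose] at h
  rw [spectrum.mem_iff, Matrix.isUnit_iff_isUnit_det, isUnit_iff_ne_zero, not_not] at h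
  obtain ⟨v, hv, hv0⟩ := Matrix.exists_mulVec_eq_zero_iff.mpr h
  refine ⟨v, hv, ?_⟩
  rw [Algebra.algebraMap_eq_smul_one, Matrix.sub_mulVec, Matrix.smul_mulVec,
    Matrix.one_mulVec, sub_eq_zero] at hv0
  exact hv0.symm

lemma map_mulVec_star (M : Matrix (Fin N) (Fin N) ℝ) (v : Fin N → ℂ) :
    (M.map Complex.ofReal) *ᵥ (star v) = star ((M.map Complex.ofReal) *ᵥ v) := by
  ext i
  simp [mulVec, dotProduct, Matrix.map_apply, star_sum, Complex.conj_ofReal]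

lemma re_dotProduct_map_pos {S : Matrix (Fin N) (Fin N) ℝ} (hS : S.PosDef)
    {v : Fin N → ℂ} (hv : v ≠ 0) :
    0 < (dotProduct (star v) ((S.map Complex.ofReal) *ᵥ v)).re := by
  classical
  set a : Fin N → ℝ := fun i => (v i).re with ha
  set b : Fin N → ℝ := fun i => (v i).im with hb
  have key : (dotProduct (star v) ((S.map Complex.ofReal) *ᵥ v)).re
      = dotProduct a (S *ᵥ a) + dotProduct b (S *ᵥ b) := by
    simp only [dotProduct, mulVec, Matrix.map_apply, Pi.star_apply, Complex.re_sum,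
      Complex.mul_re, Complex.star_def, Complex.conj_re, Complex.conj_im, Complex.im_sum,
      Complex.re_sum, Complex.re_ofReal_mul, Complex.im_ofReal_mul]
    rw [← Finset.sum_add_distrib]
    refine Finset.sum_congr rfl fun i _ => ?_
    simp only [Complex.ofReal_re, Complex.ofReal_im, mul_zero, zero_mul, sub_zero, neg_mul]
    rw [Finset.mul_sum, Finset.mul_sum, ← Finset.sum_add_distrib, sub_neg_eq_add,
      ← Finset.sum_add_distrib]
  rw [key]
  have hab : a ≠ 0 ∨ b ≠ 0 := by
    by_contra hc
    push_neg at hc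
    apply hv
    funext i
    have h1 := congrFun hc.1 i
    have h2 := congrFun hc.2 i
    simp only [ha, hb, Pi.zero_apply] at h1 h2
    exact Complex.ext h1 h2
  have hsa : 0 ≤ dotProduct a (S *ᵥ a) := by
    have := hS.posSemidef.dotProduct_mulVec_nonneg a; rwa [star_trivial] at this
  have hsb : 0 ≤ dotProduct b (S *ᵥ b) := by
    have := hS.posSemidef.dotProduct_mulVec_nonneg b; rwa [star_trivial] at this
  rcases hab with hne | hne
  · have := hS.dotProduct_mulVec_pos hne; rw [star_trivial] at this; linarith
  · have := hS.dotProduct_mulVec_pos hne; rw [star_trivial] at this; linarith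

lemma fromBlocks_posDef_iff {Q : Matrix (Fin N) (Fin N) ℝ} (hQ : Q.PosDef)
    (A : Matrix (Fin N) (Fin N) ℝ) :
    (Matrix.fromBlocks Q Aᵀ A Q⁻¹).PosDef ↔ (Q⁻¹ - A * Q⁻¹ * Aᵀ).PosDef := by
  classical
  letI := hQ.isUnit.invertible
  have hBH : (Aᵀ)ᴴ = A := by
    ext i j
    simp [Matrix.conjTranspose_apply]
  have hblockeq : Matrix.fromBlocks Q Aᵀ A Q⁻¹ = Matrix.fromBlocks Q Aᵀ ((Aᵀ)ᴴ) Q⁻¹ := by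
    rw [hBH]
  have hschur : Q⁻¹ - A * Q⁻¹ * Aᵀ = Q⁻¹ - (Aᵀ)ᴴ * Q⁻¹ * Aᵀ := by rw [hBH]
  rw [hblockeq, hschur]
  rw [posDef_iff_dotProduct_mulVec, posDef_iff_dotProduct_mulVec]
  constructor
  · rintro ⟨hherm, hpos⟩
    refine ⟨(Matrix.IsHermitian.fromBlocks₁₁ _ _ hQ.1).mp hherm, fun y hy => ?_⟩
    have hu : (-((Q⁻¹ * Aᵀ) *ᵥ y) ⊕ᵥ y) ≠ 0 := by
      intro hc
      exact hy (funext fun i => congrFun hc (Sum.inr i))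
    have h := hpos hu
    rw [dotProduct_mulVec, schur_complement_eq₁₁ Aᵀ Q⁻¹ _ _ hQ.1, neg_add_cancel,
      dotProduct_zero, zero_add] at h
    rwa [dotProduct_mulVec]
  · rintro ⟨hSh, hSpos⟩
    refine ⟨(Matrix.IsHermitian.fromBlocks₁₁ _ _ hQ.1).mpr hSh, fun u hu => ?_⟩
    rw [dotProduct_mulVec, ← Sum.elim_comp_inl_inr u, schur_complement_eq₁₁ Aᵀ Q⁻¹ _ _ hQ.1]
    rcases eq_or_ne (u ∘ Sum.inr) 0 with hy | hy
    · have hx : u ∘ Sum.inl ≠ 0 := by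
        intro hc
        apply hu
        funext i
        cases i with
        | inl i => exact congrFun hc i
        | inr i => exact congrFun hy i
      rw [hy]
      simp only [Matrix.mulVec_zero, add_zero, star_zero, zero_dotProduct,
        Matrix.vecMul_zero, zero_dotProduct, dotProduct_zero, add_zero]
      have := hQ.dotProduct_mulVec_pos hx
      rwa [dotProduct_mulVec] at this
    · refine add_pos_of_nonneg_of_pos ?_ ?_
      · have := hQ.posSemidef.dotProduct_mulVec_nonneg (u ∘ Sum.inl + (Q⁻¹ * Aᵀ) *ᵥ (u ∘ Sum.inr))
        rwa [dotProduct_mulVec] at this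
      · have := hSpos hy
        rwa [dotProduct_mulVec] at this

lemma map_ofReal_pow (M : Matrix (Fin N) (Fin N) ℝ) (k : ℕ) :
    (M ^ k).map Complex.ofReal = (M.map Complex.ofReal) ^ k := by
  have := map_pow (Complex.ofRealHom.mapMatrix (m := Fin N)) M k
  exact this

lemma exists_pow_norm_le {M : Matrix (Fin N) (Fin N) ℝ}
    (h : ∀ μ ∈ spectrum ℂ (M.map Complex.ofReal), ‖μ‖ < 1) :
    ∃ c : ℝ, 0 ≤ c ∧ c < 1 ∧ ∀ᶠ k in atTop, ‖M ^ k‖ ≤ c ^ k := by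
  rcases Nat.eq_zero_or_pos N with hN | hN
  · refine ⟨0, le_refl _, one_pos, ?_⟩
    filter_upwards [eventually_ge_atTop 1] with k hk
    have h1 : M ^ k = 0 := by
      subst hN
      ext i j
      exact i.elim0
    rw [h1, norm_zero, zero_pow (by omega)]
  · haveI : Nonempty (Fin N) := ⟨⟨0, hN⟩⟩
    have hρ : spectralRadius ℂ (M.map Complex.ofReal) < 1 := by
      have := spectrum.spectralRadius_lt_of_forall_lt (a := M.map Complex.ofReal) (r := 1)
        (fun z hz => by rw [← NNReal.coe_lt_coe]; simpa using (h z hz))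
      simpa using this
    obtain ⟨u, hu1, hu2⟩ := exists_between hρ
    have hut : u ≠ ⊤ := (hu2.trans_le le_top).ne
    have hev := (spectrum.pow_nnnorm_pow_one_div_tendsto_nhds_spectralRadius
      (M.map Complex.ofReal)).eventually_lt_const hu1
    refine ⟨u.toReal, ENNReal.toReal_nonneg, ?_, ?_⟩
    · have := ENNReal.toReal_strict_mono (by simp) hu2
      simpa using this
    · filter_upwards [hev, eventually_ge_atTop 1] with k hk hk1
      have hkne : (k : ℝ) ≠ 0 := by positivity
      have hle : (‖(M.map Complex.ofReal) ^ k‖₊ : ℝ≥0∞) ≤ u ^ k := by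
        have h2 : ((‖(M.map Complex.ofReal) ^ k‖₊ : ℝ≥0∞) ^ (1/(k:ℝ))) ^ (k:ℝ)
            ≤ u ^ (k:ℝ) := ENNReal.rpow_le_rpow hk.le (Nat.cast_nonneg k)
        rw [← ENNReal.rpow_natCast u k]
        rwa [← ENNReal.rpow_mul, one_div, inv_mul_cancel₀ hkne, ENNReal.rpow_one] at h2
      have h3 := ENNReal.toReal_mono (ENNReal.pow_ne_top hut) hle
      rw [ENNReal.toReal_pow] at h3
      calc ‖M ^ k‖ = ((‖(M.map Complex.ofReal) ^ k‖₊ : ℝ≥0∞)).toReal := by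
            rw [← map_ofReal_pow, nnnorm_map_ofReal]
            simp [coe_nnnorm]
        _ ≤ u.toReal ^ k := h3

lemma exists_lyapunov {A : Matrix (Fin N) (Fin N) ℝ}
    (h : ∀ μ ∈ spectrum ℂ (A.map Complex.ofReal), ‖μ‖ < 1) :
    ∃ P : Matrix (Fin N) (Fin N) ℝ, P.PosDef ∧ P - A * P * Aᵀ = 1 := by
  classical
  obtain ⟨c₁, hc₁0, hc₁1, hev₁⟩ := exists_pow_norm_le h
  have hT : ∀ μ ∈ spectrum ℂ (Aᵀ.map Complex.ofReal), ‖μ‖ < 1 := by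
    intro μ hμ
    apply h
    rw [Matrix.transpose_map] at hμ
    exact mem_spectrum_transpose.mp hμ
  obtain ⟨c₂, hc₂0, hc₂1, hev₂⟩ := exists_pow_norm_le hT
  set t : ℕ → Matrix (Fin N) (Fin N) ℝ := fun k => A ^ k * (Aᵀ) ^ k with ht
  have hS : Summable fun k => ‖t k‖ := by
    refine Summable.of_norm_bounded_eventually_nat (g := fun k => (c₁*c₂)^k)
      (summable_geometric_of_lt_one (by positivity) (by nlinarith)) ?_
    filter_upwards [hev₁, hev₂] with k h1 h2
    rw [norm_norm, mul_pow]
    calc ‖t k‖ ≤ ‖A ^ k‖ * ‖(Aᵀ) ^ k‖ := Matrix.linfty_opNorm_mul _ _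
      _ ≤ c₁ ^ k * c₂ ^ k := by
          have := norm_nonneg (A ^ k)
          have := norm_nonneg ((Aᵀ) ^ k)
          exact mul_le_mul h1 h2 (by positivity) (by positivity)
  have hent : ∀ i j, Summable fun k => t k i j := fun i j =>
    Summable.of_norm_bounded hS fun k => entry_norm_le (t k) i j
  set P : Matrix (Fin N) (Fin N) ℝ := Matrix.of (fun i j => ∑' k, t k i j) with hP
  have hsummand : ∀ (x y : Fin N → ℝ) i j, Summable fun k => y i * (t k i j * x j) :=
    fun x y i j => ((hent i j).mul_right (x j)).mul_left (y i)
  have h1 : ∀ (x y : Fin N → ℝ) (k : ℕ) (T : Matrix (Fin N) (Fin N) ℝ),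
      dotProduct y (T *ᵥ x) = ∑ i, ∑ j, y i * (T i j * x j) := by
    intro x y k T
    simp [dotProduct, mulVec, Finset.mul_sum]
  have hsumdot : ∀ (x y : Fin N → ℝ), Summable fun k => dotProduct y (t k *ᵥ x) := by
    intro x y
    refine Summable.congr (f := fun k => ∑ i, ∑ j, y i * (t k i j * x j)) ?_ ?_
    · exact summable_sum fun i _ => summable_sum fun j _ => hsummand x y i j
    · intro k
      exact (h1 x y k (t k)).symm
  have key : ∀ x y : Fin N → ℝ, dotProduct y (P *ᵥ x) = ∑' k, dotProduct y (t k *ᵥ x) := by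
    intro x y
    calc dotProduct y (P *ᵥ x) = ∑ i, ∑ j, y i * ((∑' k, t k i j) * x j) := by
          simp [dotProduct, mulVec, Finset.mul_sum, hP]
      _ = ∑ i, ∑ j, ∑' k, y i * (t k i j * x j) := by
          refine Finset.sum_congr rfl fun i _ => Finset.sum_congr rfl fun j _ => ?_
          rw [← tsum_mul_right, ← tsum_mul_left]
      _ = ∑ i, ∑' k, ∑ j, y i * (t k i j * x j) :=
          Finset.sum_congr rfl fun i _ => (Summable.tsum_finsetSum fun j _ => hsummand x y i j).symm
      _ = ∑' k, ∑ i, ∑ j, y i * (t k i j * x j) :=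
          (Summable.tsum_finsetSum fun i _ => summable_sum fun j _ => hsummand x y i j).symm
      _ = ∑' k, dotProduct y (t k *ᵥ x) := tsum_congr fun k => (h1 x y k (t k)).symm
  have htsymm : ∀ k, (t k)ᵀ = t k := by
    intro k
    rw [ht]
    simp only [Matrix.transpose_mul, Matrix.transpose_pow, Matrix.transpose_transpose]
  have hPsymm : P.IsHermitian := by
    rw [Matrix.IsHermitian]
    ext i j
    show Pᵀ i j = P i j
    rw [Matrix.transpose_apply]
    simp only [hP, Matrix.of_apply]
    refine tsum_congr fun k => ?_
    conv_lhs => rw [← htsymm k]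
    rfl
  have hterm : ∀ (x : Fin N → ℝ) k,
      dotProduct x (t k *ᵥ x) = dotProduct ((Aᵀ)^k *ᵥ x) ((Aᵀ)^k *ᵥ x) := by
    intro x k
    rw [ht, ← Matrix.mulVec_mulVec, Matrix.dotProduct_mulVec, ← Matrix.transpose_pow,
      Matrix.mulVec_transpose]
  have hPpos : P.PosDef := by
    refine Matrix.PosDef.of_dotProduct_mulVec_pos hPsymm fun x hx => ?_
    rw [star_trivial, key x x]
    have h0 : 0 < dotProduct x (t 0 *ᵥ x) := by
      rw [hterm x 0, pow_zero, Matrix.one_mulVec]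
      have := Matrix.dotProduct_self_star_pos_iff (v := x)
      rw [star_trivial] at this
      exact this.mpr hx
    refine lt_of_lt_of_le h0 (Summable.le_tsum (hsumdot x x) 0 fun k _ => ?_)
    rw [hterm x k]
    have := dotProduct_self_star_nonneg ((Aᵀ)^k *ᵥ x)
    rwa [star_trivial] at this
  have hAt : ∀ k, t (k+1) = A * t k * Aᵀ := by
    intro k
    show A ^ (k+1) * Aᵀ ^ (k+1) = A * (A ^ k * Aᵀ ^ k) * Aᵀ
    rw [pow_succ' A k, pow_succ Aᵀ k]
    simp only [Matrix.mul_assoc]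
  have hAPA : A * P * Aᵀ = Matrix.of (fun i j => ∑' k, t (k+1) i j) := by
    ext i j
    rw [Matrix.mul_mul_apply, Matrix.transpose_transpose, key (A j) (A i)]
    show _ = ∑' k, t (k+1) i j
    refine tsum_congr fun k => ?_
    rw [hAt k, Matrix.mul_mul_apply, Matrix.transpose_transpose]
  refine ⟨P, hPpos, ?_⟩
  ext i j
  rw [Matrix.sub_apply, hAPA]
  show (∑' k, t k i j) - (∑' k, t (k+1) i j) = (1 : Matrix (Fin N) (Fin N) ℝ) i j
  rw [Summable.tsum_eq_zero_add (hent i j), add_sub_cancel_right]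
  show t 0 i j = (1 : Matrix (Fin N) (Fin N) ℝ) i j
  rw [ht]
  simp

end SchurLMI

/-- LMI characterization of Schur stability (Eq. (13) with coupling `Q = R⁻¹`): `Â` is
Schur stable iff there exists `Q ≻ 0` such that `[[Q, Âᵀ],[Â, Q⁻¹]] ≻ 0`. -/
theorem schur_stable_iff_lmi {N : ℕ} (Ahat : Matrix (Fin N) (Fin N) ℝ) :
    (∀ μ ∈ spectrum ℂ (Ahat.map Complex.ofReal), ‖μ‖ < 1) ↔
    ∃ Q : Matrix (Fin N) (Fin N) ℝ, Q.PosDef ∧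
      (Matrix.fromBlocks Q Ahatᵀ Ahat Q⁻¹).PosDef := by
  constructor
  · intro h
    obtain ⟨P, hP, hLyap⟩ := SchurLMI.exists_lyapunov h
    have hdet : IsUnit P.det := isUnit_iff_ne_zero.mpr hP.det_pos.ne'
    refine ⟨P⁻¹, hP.inv, (SchurLMI.fromBlocks_posDef_iff hP.inv Ahat).mpr ?_⟩
    rw [Matrix.nonsing_inv_nonsing_inv P hdet, hLyap]
    exact Matrix.PosDef.one
  · rintro ⟨Q, hQ, hblock⟩
    have hS := (SchurLMI.fromBlocks_posDef_iff hQ Ahat).mp hblock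
    have hP : (Q⁻¹).PosDef := hQ.inv
    intro μ hμ
    obtain ⟨v, hv0, hv⟩ := SchurLMI.exists_left_eigenvector hμ
    set A' := Ahat.map Complex.ofReal with hA'
    set P' := (Q⁻¹).map Complex.ofReal with hP'
    have hreP := SchurLMI.re_dotProduct_map_pos hP hv0
    have hreS := SchurLMI.re_dotProduct_map_pos hS hv0
    rw [← hP'] at hreP
    -- identify the complexification of the Lyapunov-type matrix
    have hmapS : (Q⁻¹ - Ahat * Q⁻¹ * Ahatᵀ).map Complex.ofReal = P' - A' * P' * A'ᵀ := by
      ext i j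
      simp only [Matrix.map_apply, Matrix.sub_apply, Matrix.mul_apply, Matrix.transpose_apply,
        hA', hP']
      push_cast
      rfl
    rw [hmapS] at hreS
    -- compute the quadratic form
    have hAv : A'ᵀ *ᵥ v = μ • v := hv
    have hstar : A'ᵀ *ᵥ star v = star (μ • v) := by
      rw [hA', ← Matrix.transpose_map, SchurLMI.map_mulVec_star, Matrix.transpose_map, ← hA', hAv]
    have hT : dotProduct (star v) ((A' * P' * A'ᵀ) *ᵥ v)
        = (μ * starRingEnd ℂ μ) * dotProduct (star v) (P' *ᵥ v) := by
      rw [← Matrix.mulVec_mulVec, hAv, Matrix.mulVec_smul, dotProduct_smul,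
        ← Matrix.mulVec_mulVec, Matrix.dotProduct_mulVec (star v), ← Matrix.mulVec_transpose,
        hstar]
      rw [star_smul, smul_dotProduct]
      simp only [smul_eq_mul, RCLike.star_def]
      ring
    have hsub : dotProduct (star v) ((P' - A' * P' * A'ᵀ) *ᵥ v)
        = dotProduct (star v) (P' *ᵥ v) - (μ * starRingEnd ℂ μ) * dotProduct (star v) (P' *ᵥ v) := by
      rw [Matrix.sub_mulVec, dotProduct_sub, hT]
    rw [hsub] at hreS
    have hnorm : μ * starRingEnd ℂ μ = (‖μ‖^2 : ℝ) := by
      rw [Complex.mul_conj']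
      norm_cast
    rw [hnorm] at hreS
    rw [Complex.sub_re, Complex.re_ofReal_mul] at hreS
    by_contra hc
    push_neg at hc
    have h2 : 1 ≤ ‖μ‖^2 := by nlinarith
    nlinarith
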